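/- Let x: [0,∞) → ℝ be differentiable with x' = g(τ) − a(x − b(τ)), where a > 0, |g(τ)| ≤ M, and b(τ) → b* as τ → ∞ with |b(τ)| ≤ B. Then limsup_{τ→∞} |x(τ) − b*| ≤ M/a. -/

import Mathlib

open Filter Real

theorem stmt18 (x g b : ℝ → ℝ) (a M B bstar : ℝ)
    (ha : 0 < a) (hg : ∀ τ, |g τ| ≤ M) (hB : ∀ τ, |b τ| ≤ B)
    (hb : Filter.Tendsto b Filter.atTop (nhds bstar))
    (hode : ∀ τ, HasDerivAt x (g τ - a * (x τ - b τ)) τ) :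
    Filter.limsup (fun τ => |x τ - bstar|) Filter.atTop ≤ M / a := by
  have hM : 0 ≤ M := (abs_nonneg _).trans (hg 0)
  set f : ℝ → ℝ := fun τ => Real.exp (a*τ) * (x τ - bstar) with hfdef
  have hf' : ∀ τ, HasDerivAt f (Real.exp (a*τ) * (g τ + a * (b τ - bstar))) τ := by
    intro τ
    have he : HasDerivAt (fun τ => Real.exp (a*τ)) (Real.exp (a*τ) * a) τ := by
      simpa using ((hasDerivAt_id τ).const_mul a).exp
    have := he.mul ((hode τ).sub_const bstar)
    exact this.congr_deriv (by ring)
  have key : ∀ ε > 0, ∀ᶠ τ in atTop, |x τ - bstar| ≤ M/a + ε := by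
    intro ε hε
    obtain ⟨T, hT⟩ := Metric.tendsto_atTop.mp hb (ε/2) (by positivity)
    set C := M/a + ε/2 with hC
    have hC0 : 0 ≤ C := by positivity
    have hCa : C * a = M + a * (ε/2) := by rw [hC, add_mul, div_mul_cancel₀ M ha.ne']; ring
    have hbound : ∀ τ ∈ Set.Ici T, |Real.exp (a*τ) * (g τ + a * (b τ - bstar))|
        ≤ C * (Real.exp (a*τ) * a) := by
      intro τ hτ
      have h1 : |b τ - bstar| ≤ ε/2 := by
        have := hT τ hτ
        rw [Real.dist_eq] at this
        linarith
      have h2 : |g τ + a * (b τ - bstar)| ≤ M + a * (ε/2) := by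
        calc |g τ + a * (b τ - bstar)| ≤ |g τ| + |a * (b τ - bstar)| := abs_add_le _ _
        _ ≤ M + a * (ε/2) := by
            rw [abs_mul, abs_of_pos ha]
            have := hg τ
            nlinarith
      rw [abs_mul, abs_of_pos (Real.exp_pos _)]
      calc Real.exp (a*τ) * |g τ + a * (b τ - bstar)|
          ≤ Real.exp (a*τ) * (M + a*(ε/2)) :=
            mul_le_mul_of_nonneg_left h2 (Real.exp_pos _).le
        _ = C * (Real.exp (a*τ) * a) := by rw [← hCa]; ring
    -- comparison: for s = ±1, τ ↦ C exp(aτ) + s * f τ is monotone on [T,∞)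
    have mono : ∀ s : ℝ, |s| = 1 →
        MonotoneOn (fun τ => C * Real.exp (a*τ) + s * f τ) (Set.Ici T) := by
      intro s hs
      have hd : ∀ τ, HasDerivAt (fun τ => C * Real.exp (a*τ) + s * f τ)
          (C * (Real.exp (a*τ) * a) + s * (Real.exp (a*τ) * (g τ + a * (b τ - bstar)))) τ := by
        intro τ
        have he : HasDerivAt (fun τ => Real.exp (a*τ)) (Real.exp (a*τ) * a) τ := by
          simpa using ((hasDerivAt_id τ).const_mul a).exp
        exact (he.const_mul C).add ((hf' τ).const_mul s)
      apply monotoneOn_of_deriv_nonneg (convex_Ici T)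
      · exact (Differentiable.continuous (fun τ => (hd τ).differentiableAt)).continuousOn
      · exact fun τ _ => ((hd τ).differentiableAt).differentiableWithinAt
      · intro τ hτ
        rw [interior_Ici] at hτ
        rw [(hd τ).deriv]
        have hb1 := hbound τ (Set.mem_Ici.mpr (le_of_lt (Set.mem_Ioi.mp hτ)))
        have : |s * (Real.exp (a*τ) * (g τ + a * (b τ - bstar)))| ≤ C * (Real.exp (a*τ) * a) := by
          rw [abs_mul, hs, one_mul]; exact hb1
        have := neg_abs_le (s * (Real.exp (a*τ) * (g τ + a * (b τ - bstar))))
        linarith [neg_le_of_abs_le ‹|s * (Real.exp (a*τ) * (g τ + a * (b τ - bstar)))| ≤ _›]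
    have habs : ∀ τ ≥ T, |f τ| ≤ |f T| + C * Real.exp (a*τ) := by
      intro τ hτ
      have h1 := mono 1 (by norm_num) (Set.mem_Ici.mpr le_rfl) (Set.mem_Ici.mpr hτ) hτ
      have h2 := mono (-1) (by norm_num) (Set.mem_Ici.mpr le_rfl) (Set.mem_Ici.mpr hτ) hτ
      simp only [one_mul, neg_one_mul] at h1 h2
      have hexp : 0 ≤ C * Real.exp (a*T) := mul_nonneg hC0 (Real.exp_pos _).le
      rw [abs_le]
      constructor
      · linarith [le_abs_self (f T), neg_abs_le (f T)]
      · linarith [le_abs_self (f T), neg_abs_le (f T)]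
    -- translate back to x
    have hx : ∀ τ ≥ T, |x τ - bstar| ≤ |f T| * Real.exp (-(a*τ)) + C := by
      intro τ hτ
      have hxf : x τ - bstar = f τ * Real.exp (-(a*τ)) := by
        rw [hfdef]
        simp only []
        rw [mul_comm (Real.exp (a*τ)) _, mul_assoc, ← Real.exp_add]
        simp
      rw [hxf, abs_mul, abs_of_pos (Real.exp_pos _)]
      have := habs τ hτ
      have h3 : |f τ| * Real.exp (-(a*τ)) ≤ (|f T| + C * Real.exp (a*τ)) * Real.exp (-(a*τ)) :=
        mul_le_mul_of_nonneg_right this (Real.exp_pos _).le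
      calc |f τ| * Real.exp (-(a*τ)) ≤ (|f T| + C * Real.exp (a*τ)) * Real.exp (-(a*τ)) := h3
        _ = |f T| * Real.exp (-(a*τ)) + C * (Real.exp (a*τ) * Real.exp (-(a*τ))) := by ring
        _ = |f T| * Real.exp (-(a*τ)) + C := by rw [← Real.exp_add]; simp
    -- exp decay term eventually small
    have hdecay : Tendsto (fun τ => |f T| * Real.exp (-(a*τ))) atTop (nhds 0) := by
      have h1 : Tendsto (fun τ : ℝ => a * τ) atTop atTop :=
        Tendsto.const_mul_atTop ha tendsto_id
      have := (Real.tendsto_exp_neg_atTop_nhds_zero.comp h1).const_mul (|f T|)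
      simpa using this
    have hsmall : ∀ᶠ τ in atTop, |f T| * Real.exp (-(a*τ)) ≤ ε/2 := by
      have := hdecay.eventually (eventually_le_nhds (show (0:ℝ) < ε/2 by positivity))
      exact this
    filter_upwards [eventually_ge_atTop T, hsmall] with τ h1 h2
    have := hx τ h1
    rw [hC] at this
    linarith
  -- conclude limsup bound
  have cobdd : IsCoboundedUnder (· ≤ ·) atTop (fun τ => |x τ - bstar|) :=
    isCoboundedUnder_le_of_le atTop (fun τ => abs_nonneg _)
  have hle : ∀ ε > 0, Filter.limsup (fun τ => |x τ - bstar|) atTop ≤ M/a + ε := by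
    intro ε hε
    exact Filter.limsup_le_of_le cobdd (key ε hε)
  exact le_of_forall_pos_le_add hle
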